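/- The LTS3 scheme conserves total mass exactly: under the flux-form and locality assumptions, for every coarse step Δt, every M ≥ 1, and every initial state x⁰, one LTS3 step satisfies m(x^new) = m(x⁰), where m(x) = Σ_{i∈Cell} A_i·x_i. -/

import Mathlib

open scoped Classical

/-- The substepping recursion of one LTS3 step. Starting from the state `x0` and the
stage vectors `x1`, `x2`, with coarse step `Δt` and substep count `M`, it returns the
quintuple `(a^k, P^k, Q^k, R^k, z^{k-1})`: the fine solution after `k` substeps
(meaningful on `F`), the three accumulated interface correction terms (meaningful on
`I₁ ∪ I₂`), and the last third-stage vector `z` computed. -/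
noncomputable def lts3Sub {ι : Type*} (F I₁ : Set ι)
    (G : (ι → ℝ) → ι → ℝ) (Δt : ℝ) (M : ℕ) (x0 x1 x2 : ι → ℝ) :
    ℕ → ((ι → ℝ) × (ι → ℝ) × (ι → ℝ) × (ι → ℝ) × (ι → ℝ))
  | 0 => (x0, fun _ => 0, fun _ => 0, fun _ => 0, x0)
  | k + 1 =>
    let s := lts3Sub F I₁ G Δt M x0 x1 x2 k
    let a := s.1
    let P := s.2.1
    let Q := s.2.2.1
    let R := s.2.2.2.1
    -- interpolation coefficients
    let αk : ℝ := (k : ℝ) / M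
    let αt : ℝ := (k : ℝ) ^ 2 / (M : ℝ) ^ 2
    let βk : ℝ := ((k : ℝ) + 1) / M
    let βt : ℝ := (k : ℝ) * ((k : ℝ) + 2) / (M : ℝ) ^ 2
    let γk : ℝ := (2 * (k : ℝ) + 1) / (2 * M)
    let γt : ℝ := (2 * (k : ℝ) ^ 2 + 2 * (k : ℝ) + 1) / (2 * (M : ℝ) ^ 2)
    -- v^k: a^k on F, the α-interpolant on I₁, x⁰ on I₂ ∪ C
    let v : ι → ℝ := fun i =>
      if i ∈ F then a i
      else if i ∈ I₁ then
        (1 - αk - αt) * x0 i + (αk - αt) * x1 i + 2 * αt * x2 i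
      else x0 i
    -- b^k = v^k + (Δt/M)·G(v^k) (used on F)
    let b : ι → ℝ := fun i => v i + (Δt / M) * G v i
    -- w^k: b^k on F, the β-interpolant on I₁, x¹ on I₂ ∪ C
    let w : ι → ℝ := fun i =>
      if i ∈ F then b i
      else if i ∈ I₁ then
        (1 - βk - βt) * x0 i + (βk - βt) * x1 i + 2 * βt * x2 i
      else x1 i
    -- c^k = (3/4)a^k + (1/4)b^k + (1/4)(Δt/M)·G(w^k) (used on F)
    let c : ι → ℝ := fun i =>
      (3 / 4) * a i + (1 / 4) * b i + (1 / 4) * (Δt / M) * G w i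
    -- z^k: c^k on F, the γ-interpolant on I₁, x² on I₂ ∪ C
    let z : ι → ℝ := fun i =>
      if i ∈ F then c i
      else if i ∈ I₁ then
        (1 - γk - γt) * x0 i + (γk - γt) * x1 i + 2 * γt * x2 i
      else x2 i
    (fun i => (1 / 3) * a i + (2 / 3) * c i + (2 / 3) * (Δt / M) * G z i,
     fun i => P i + G v i,
     fun i => Q i + G w i,
     fun i => R i + G z i,
     z)

/-- One step of the third-order local time-stepping scheme LTS3, with fine region `F`,
fine cells nearest interface 1 `Fu = F̲ ⊆ F`, interface regions `I₁`, `I₂`, coarse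
region `C`, right-hand side `G`, coarse step `Δt` and `M` fine substeps per coarse
step. -/
noncomputable def lts3Step {ι : Type*} (F Fu I₁ I₂ C : Set ι)
    (G : (ι → ℝ) → ι → ℝ) (Δt : ℝ) (M : ℕ) (x0 : ι → ℝ) : ι → ℝ :=
  -- x¹ = x⁰ + Δt·G(x⁰) on F̲ ∪ I₁ ∪ I₂ ∪ C, and x¹ = x⁰ on F \ F̲
  let x1 : ι → ℝ := fun i =>
    if i ∈ F ∧ i ∉ Fu then x0 i else x0 i + Δt * G x0 i
  -- x² = (3/4)x⁰ + (1/4)x¹ + (1/4)Δt·G(x¹) (used on I₁ ∪ I₂ ∪ C)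
  let x2 : ι → ℝ := fun i =>
    (3 / 4) * x0 i + (1 / 4) * x1 i + (1 / 4) * Δt * G x1 i
  let s := lts3Sub F I₁ G Δt M x0 x1 x2 M
  fun i =>
    if i ∈ F then s.1 i
    else if i ∈ C then
      (1 / 3) * x0 i + (2 / 3) * x2 i + (2 / 3) * Δt * G s.2.2.2.2 i
    else
      x0 i + (Δt / M) *
        ((1 / 6) * s.2.1 i + (1 / 6) * s.2.2.1 i + (2 / 3) * s.2.2.2.1 i)


namespace LTS3Aux

variable {ι : Type*} (F I₁ : Set ι) (G : (ι → ℝ) → ι → ℝ) (Δt : ℝ) (M : ℕ) (x0 x1 x2 : ι → ℝ)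

/-- The first-stage vector `v^k`. -/
noncomputable def V (k : ℕ) : ι → ℝ := fun i =>
  if i ∈ F then (lts3Sub F I₁ G Δt M x0 x1 x2 k).1 i
  else if i ∈ I₁ then
    (1 - (k : ℝ) / M - (k : ℝ) ^ 2 / (M : ℝ) ^ 2) * x0 i +
      ((k : ℝ) / M - (k : ℝ) ^ 2 / (M : ℝ) ^ 2) * x1 i +
      2 * ((k : ℝ) ^ 2 / (M : ℝ) ^ 2) * x2 i
  else x0 i

noncomputable def B (k : ℕ) : ι → ℝ := fun i =>
  V F I₁ G Δt M x0 x1 x2 k i + (Δt / M) * G (V F I₁ G Δt M x0 x1 x2 k) i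

/-- The second-stage vector `w^k`. -/
noncomputable def W (k : ℕ) : ι → ℝ := fun i =>
  if i ∈ F then B F I₁ G Δt M x0 x1 x2 k i
  else if i ∈ I₁ then
    (1 - ((k : ℝ) + 1) / M - (k : ℝ) * ((k : ℝ) + 2) / (M : ℝ) ^ 2) * x0 i +
      (((k : ℝ) + 1) / M - (k : ℝ) * ((k : ℝ) + 2) / (M : ℝ) ^ 2) * x1 i +
      2 * ((k : ℝ) * ((k : ℝ) + 2) / (M : ℝ) ^ 2) * x2 i
  else x1 i

noncomputable def Cc (k : ℕ) : ι → ℝ := fun i =>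
  (3 / 4) * (lts3Sub F I₁ G Δt M x0 x1 x2 k).1 i + (1 / 4) * B F I₁ G Δt M x0 x1 x2 k i +
    (1 / 4) * (Δt / M) * G (W F I₁ G Δt M x0 x1 x2 k) i

/-- The third-stage vector `z^k`. -/
noncomputable def Z (k : ℕ) : ι → ℝ := fun i =>
  if i ∈ F then Cc F I₁ G Δt M x0 x1 x2 k i
  else if i ∈ I₁ then
    (1 - (2 * (k : ℝ) + 1) / (2 * M) -
        (2 * (k : ℝ) ^ 2 + 2 * (k : ℝ) + 1) / (2 * (M : ℝ) ^ 2)) * x0 i +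
      ((2 * (k : ℝ) + 1) / (2 * M) -
        (2 * (k : ℝ) ^ 2 + 2 * (k : ℝ) + 1) / (2 * (M : ℝ) ^ 2)) * x1 i +
      2 * ((2 * (k : ℝ) ^ 2 + 2 * (k : ℝ) + 1) / (2 * (M : ℝ) ^ 2)) * x2 i
  else x2 i

theorem sub_succ (k : ℕ) :
    lts3Sub F I₁ G Δt M x0 x1 x2 (k + 1) =
      (fun i => (1 / 3) * (lts3Sub F I₁ G Δt M x0 x1 x2 k).1 i +
          (2 / 3) * Cc F I₁ G Δt M x0 x1 x2 k i +
          (2 / 3) * (Δt / M) * G (Z F I₁ G Δt M x0 x1 x2 k) i,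
       fun i => (lts3Sub F I₁ G Δt M x0 x1 x2 k).2.1 i + G (V F I₁ G Δt M x0 x1 x2 k) i,
       fun i => (lts3Sub F I₁ G Δt M x0 x1 x2 k).2.2.1 i + G (W F I₁ G Δt M x0 x1 x2 k) i,
       fun i => (lts3Sub F I₁ G Δt M x0 x1 x2 k).2.2.2.1 i + G (Z F I₁ G Δt M x0 x1 x2 k) i,
       Z F I₁ G Δt M x0 x1 x2 k) := rfl


theorem fst_update (k : ℕ) {i : ι} (hi : i ∈ F) :
    (lts3Sub F I₁ G Δt M x0 x1 x2 (k + 1)).1 i =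
      (lts3Sub F I₁ G Δt M x0 x1 x2 k).1 i +
        (Δt / M) * ((1 / 6) * G (V F I₁ G Δt M x0 x1 x2 k) i +
          (1 / 6) * G (W F I₁ G Δt M x0 x1 x2 k) i +
          (2 / 3) * G (Z F I₁ G Δt M x0 x1 x2 k) i) := by
  rw [sub_succ]
  simp only [Cc, B]
  rw [show V F I₁ G Δt M x0 x1 x2 k i = (lts3Sub F I₁ G Δt M x0 x1 x2 k).1 i from
    if_pos hi]
  ring

theorem P_update (k : ℕ) (i : ι) :
    (lts3Sub F I₁ G Δt M x0 x1 x2 (k + 1)).2.1 i =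
      (lts3Sub F I₁ G Δt M x0 x1 x2 k).2.1 i + G (V F I₁ G Δt M x0 x1 x2 k) i := by
  rw [sub_succ]

theorem Q_update (k : ℕ) (i : ι) :
    (lts3Sub F I₁ G Δt M x0 x1 x2 (k + 1)).2.2.1 i =
      (lts3Sub F I₁ G Δt M x0 x1 x2 k).2.2.1 i + G (W F I₁ G Δt M x0 x1 x2 k) i := by
  rw [sub_succ]

theorem R_update (k : ℕ) (i : ι) :
    (lts3Sub F I₁ G Δt M x0 x1 x2 (k + 1)).2.2.2.1 i =
      (lts3Sub F I₁ G Δt M x0 x1 x2 k).2.2.2.1 i + G (Z F I₁ G Δt M x0 x1 x2 k) i := by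
  rw [sub_succ]

theorem zlast_eq (k : ℕ) :
    (lts3Sub F I₁ G Δt M x0 x1 x2 (k + 1)).2.2.2.2 = Z F I₁ G Δt M x0 x1 x2 k := by
  rw [sub_succ]

theorem V_eq (k : ℕ) {j : ι} (h1 : j ∉ F) (h2 : j ∉ I₁) :
    V F I₁ G Δt M x0 x1 x2 k j = x0 j := by simp [V, h1, h2]

theorem W_eq (k : ℕ) {j : ι} (h1 : j ∉ F) (h2 : j ∉ I₁) :
    W F I₁ G Δt M x0 x1 x2 k j = x1 j := by simp [W, h1, h2]

theorem Z_eq (k : ℕ) {j : ι} (h1 : j ∉ F) (h2 : j ∉ I₁) :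
    Z F I₁ G Δt M x0 x1 x2 k j = x2 j := by simp [Z, h1, h2]

end LTS3Aux
/-- Exact mass conservation for LTS3: if the right-hand side `G` is in flux form on the
cells (TRiSK discrete divergence, with each edge having two distinct incident cells),
and every flux on an edge touching a coarse cell depends only on components in
`I₂ ∪ C`, then one LTS3 step conserves the total mass `m(x) = Σ_{i ∈ Cell} A_i·x_i`
exactly, for every coarse step `Δt`, every `M ≥ 1` and every initial state `x⁰`. -/
theorem lts3_conserves_total_mass {ι : Type*} [Fintype ι]
    (F Fu I₁ I₂ C : Set ι) (hFu : Fu ⊆ F)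
    (hcover : ∀ i : ι, i ∈ F ∨ i ∈ I₁ ∨ i ∈ I₂ ∨ i ∈ C)
    (hFI₁ : F ∩ I₁ = ∅) (hFI₂ : F ∩ I₂ = ∅) (hFC : F ∩ C = ∅)
    (hI₁I₂ : I₁ ∩ I₂ = ∅) (hI₁C : I₁ ∩ C = ∅) (hI₂C : I₂ ∩ C = ∅)
    (G : (ι → ℝ) → ι → ℝ)
    {Ed : Type*} [Fintype Ed] (Cell : Finset ι)
    (c₁ c₂ : Ed → ι) (hc₁ : ∀ e, c₁ e ∈ Cell) (hc₂ : ∀ e, c₂ e ∈ Cell)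
    (hcne : ∀ e, c₁ e ≠ c₂ e)
    (A : ι → ℝ) (hA : ∀ i ∈ Cell, A i ≠ 0)
    (l : Ed → ℝ) (Fl : Ed → (ι → ℝ) → ℝ)
    (hflux : ∀ i ∈ Cell, ∀ x : ι → ℝ, G x i =
      -(1 / A i) * ((∑ e ∈ Finset.univ.filter (fun e => c₁ e = i), l e * Fl e x) -
                    (∑ e ∈ Finset.univ.filter (fun e => c₂ e = i), l e * Fl e x)))
    (hlocal : ∀ e : Ed, (c₁ e ∈ C ∨ c₂ e ∈ C) →
      ∀ x y : ι → ℝ, (∀ j ∈ I₂ ∪ C, x j = y j) → Fl e x = Fl e y) :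
    ∀ (Δt : ℝ) (M : ℕ), 1 ≤ M → ∀ x0 : ι → ℝ,
      ∑ i ∈ Cell, A i * lts3Step F Fu I₁ I₂ C G Δt M x0 i =
        ∑ i ∈ Cell, A i * x0 i := by
  intro Δt M hM x0
  -- disjointness helpers
  have dFI₁ : ∀ i : ι, i ∈ F → i ∈ I₁ → False := fun i h1 h2 =>
    Set.eq_empty_iff_forall_notMem.mp hFI₁ i ⟨h1, h2⟩
  have dFI₂ : ∀ i : ι, i ∈ F → i ∈ I₂ → False := fun i h1 h2 =>
    Set.eq_empty_iff_forall_notMem.mp hFI₂ i ⟨h1, h2⟩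
  have dFC : ∀ i : ι, i ∈ F → i ∈ C → False := fun i h1 h2 =>
    Set.eq_empty_iff_forall_notMem.mp hFC i ⟨h1, h2⟩
  have dI₁I₂ : ∀ i : ι, i ∈ I₁ → i ∈ I₂ → False := fun i h1 h2 =>
    Set.eq_empty_iff_forall_notMem.mp hI₁I₂ i ⟨h1, h2⟩
  have dI₁C : ∀ i : ι, i ∈ I₁ → i ∈ C → False := fun i h1 h2 =>
    Set.eq_empty_iff_forall_notMem.mp hI₁C i ⟨h1, h2⟩
  have dI₂C : ∀ i : ι, i ∈ I₂ → i ∈ C → False := fun i h1 h2 =>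
    Set.eq_empty_iff_forall_notMem.mp hI₂C i ⟨h1, h2⟩
  have hnF : ∀ j ∈ I₂ ∪ C, j ∉ F := by
    rintro j (hj | hj) hjF
    exacts [dFI₂ j hjF hj, dFC j hjF hj]
  have hnI₁ : ∀ j ∈ I₂ ∪ C, j ∉ I₁ := by
    rintro j (hj | hj) hjI
    exacts [dI₁I₂ j hjI hj, dI₁C j hjI hj]
  -- stage vectors
  set x1 : ι → ℝ := fun i => if i ∈ F ∧ i ∉ Fu then x0 i else x0 i + Δt * G x0 i with hx1
  set x2 : ι → ℝ := fun i =>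
    (3 / 4) * x0 i + (1 / 4) * x1 i + (1 / 4) * Δt * G x1 i with hx2
  -- total flux cancellation
  have hG0 : ∀ x : ι → ℝ, ∑ i ∈ Cell, A i * G x i = 0 := by
    intro x
    have h1 : ∀ i ∈ Cell, A i * G x i =
        (∑ e ∈ Finset.univ.filter (fun e => c₂ e = i), l e * Fl e x) -
        (∑ e ∈ Finset.univ.filter (fun e => c₁ e = i), l e * Fl e x) := by
      intro i hi
      rw [hflux i hi]
      have hAi := hA i hi
      field_simp
      ring
    rw [Finset.sum_congr rfl h1, Finset.sum_sub_distrib,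
      Finset.sum_fiberwise_of_maps_to (fun e _ => hc₂ e) (fun e => l e * Fl e x),
      Finset.sum_fiberwise_of_maps_to (fun e _ => hc₁ e) (fun e => l e * Fl e x), sub_self]
  -- coarse-cell locality
  have hGC : ∀ i ∈ Cell, i ∈ C → ∀ u v : ι → ℝ,
      (∀ j ∈ I₂ ∪ C, u j = v j) → G u i = G v i := by
    intro i hi hiC u v huv
    rw [hflux i hi u, hflux i hi v]
    have e1 : (∑ e ∈ Finset.univ.filter (fun e => c₁ e = i), l e * Fl e u) =
        ∑ e ∈ Finset.univ.filter (fun e => c₁ e = i), l e * Fl e v := by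
      refine Finset.sum_congr rfl fun e he => ?_
      rw [hlocal e (Or.inl (by rw [(Finset.mem_filter.mp he).2]; exact hiC)) u v huv]
    have e2 : (∑ e ∈ Finset.univ.filter (fun e => c₂ e = i), l e * Fl e u) =
        ∑ e ∈ Finset.univ.filter (fun e => c₂ e = i), l e * Fl e v := by
      refine Finset.sum_congr rfl fun e he => ?_
      rw [hlocal e (Or.inr (by rw [(Finset.mem_filter.mp he).2]; exact hiC)) u v huv]
    rw [e1, e2]
  -- partition of the cell set
  set CF := Cell.filter (fun i => i ∈ F) with hCF
  set CN := Cell.filter (fun i => ¬ i ∈ F) with hCN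
  set CI := CN.filter (fun i => i ∈ I₁ ∨ i ∈ I₂) with hCI
  set CC := CN.filter (fun i => ¬ (i ∈ I₁ ∨ i ∈ I₂)) with hCC
  have hsplit : ∀ f : ι → ℝ,
      ∑ i ∈ Cell, f i = ∑ i ∈ CF, f i + (∑ i ∈ CI, f i + ∑ i ∈ CC, f i) := by
    intro f
    rw [hCF, hCI, hCC, hCN,
      Finset.sum_filter_add_sum_filter_not (Cell.filter (fun i => ¬ i ∈ F))
        (fun i => i ∈ I₁ ∨ i ∈ I₂) f,
      Finset.sum_filter_add_sum_filter_not Cell (fun i => i ∈ F) f]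
  have memCF : ∀ i ∈ CF, i ∈ Cell ∧ i ∈ F := by
    intro i hi
    rw [hCF, Finset.mem_filter] at hi
    exact hi
  have memCI : ∀ i ∈ CI, i ∈ Cell ∧ i ∉ F ∧ i ∉ C := by
    intro i hi
    rw [hCI, Finset.mem_filter, hCN, Finset.mem_filter] at hi
    obtain ⟨⟨hiCell, hiF⟩, hiI⟩ := hi
    refine ⟨hiCell, hiF, fun hiC => ?_⟩
    rcases hiI with h | h
    exacts [dI₁C i h hiC, dI₂C i h hiC]
  have memCC : ∀ i ∈ CC, i ∈ Cell ∧ i ∉ F ∧ i ∉ I₁ ∧ i ∉ I₂ ∧ i ∈ C := by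
    intro i hi
    rw [hCC, Finset.mem_filter, hCN, Finset.mem_filter] at hi
    obtain ⟨⟨hiCell, hiF⟩, hiI⟩ := hi
    push_neg at hiI
    refine ⟨hiCell, hiF, hiI.1, hiI.2, ?_⟩
    rcases hcover i with h | h | h | h
    · exact absurd h hiF
    · exact absurd h hiI.1
    · exact absurd h hiI.2
    · exact h
  -- the conserved-quantity invariant of the substepping recursion
  have key : ∀ k : ℕ,
      (∑ i ∈ CF, A i * (lts3Sub F I₁ G Δt M x0 x1 x2 k).1 i) +
      ((∑ i ∈ CI, A i * (x0 i + (Δt / M) *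
          ((1 / 6) * (lts3Sub F I₁ G Δt M x0 x1 x2 k).2.1 i +
           (1 / 6) * (lts3Sub F I₁ G Δt M x0 x1 x2 k).2.2.1 i +
           (2 / 3) * (lts3Sub F I₁ G Δt M x0 x1 x2 k).2.2.2.1 i))) +
       (∑ i ∈ CC, A i * (x0 i + (k : ℝ) * (Δt / M) *
          ((1 / 6) * G x0 i + (1 / 6) * G x1 i + (2 / 3) * G x2 i)))) =
      ∑ i ∈ Cell, A i * x0 i := by
    intro k
    induction k with
    | zero =>
      rw [hsplit]
      simp [lts3Sub]
    | succ k ih =>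
      have comboZero : ∑ i ∈ Cell, A i *
          ((1 / 6) * G (LTS3Aux.V F I₁ G Δt M x0 x1 x2 k) i +
           (1 / 6) * G (LTS3Aux.W F I₁ G Δt M x0 x1 x2 k) i +
           (2 / 3) * G (LTS3Aux.Z F I₁ G Δt M x0 x1 x2 k) i) = 0 := by
        have e : ∀ i ∈ Cell, A i *
            ((1 / 6) * G (LTS3Aux.V F I₁ G Δt M x0 x1 x2 k) i +
             (1 / 6) * G (LTS3Aux.W F I₁ G Δt M x0 x1 x2 k) i +
             (2 / 3) * G (LTS3Aux.Z F I₁ G Δt M x0 x1 x2 k) i) =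
            (1 / 6) * (A i * G (LTS3Aux.V F I₁ G Δt M x0 x1 x2 k) i) +
            ((1 / 6) * (A i * G (LTS3Aux.W F I₁ G Δt M x0 x1 x2 k) i) +
             (2 / 3) * (A i * G (LTS3Aux.Z F I₁ G Δt M x0 x1 x2 k) i)) :=
          fun i _ => by ring
        rw [Finset.sum_congr rfl e, Finset.sum_add_distrib, Finset.sum_add_distrib,
          ← Finset.mul_sum, ← Finset.mul_sum, ← Finset.mul_sum,
          hG0, hG0, hG0]
        ring
      have hTC := (hsplit (fun i => A i *
          ((1 / 6) * G (LTS3Aux.V F I₁ G Δt M x0 x1 x2 k) i +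
           (1 / 6) * G (LTS3Aux.W F I₁ G Δt M x0 x1 x2 k) i +
           (2 / 3) * G (LTS3Aux.Z F I₁ G Δt M x0 x1 x2 k) i))).symm.trans comboZero
      have e1 : (∑ i ∈ CF, A i * (lts3Sub F I₁ G Δt M x0 x1 x2 (k + 1)).1 i) =
          (∑ i ∈ CF, A i * (lts3Sub F I₁ G Δt M x0 x1 x2 k).1 i) +
          (Δt / M) * ∑ i ∈ CF, A i *
            ((1 / 6) * G (LTS3Aux.V F I₁ G Δt M x0 x1 x2 k) i +
             (1 / 6) * G (LTS3Aux.W F I₁ G Δt M x0 x1 x2 k) i +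
             (2 / 3) * G (LTS3Aux.Z F I₁ G Δt M x0 x1 x2 k) i) := by
        rw [Finset.mul_sum, ← Finset.sum_add_distrib]
        refine Finset.sum_congr rfl fun i hi => ?_
        rw [LTS3Aux.fst_update F I₁ G Δt M x0 x1 x2 k (memCF i hi).2]
        ring
      have e2 : (∑ i ∈ CI, A i * (x0 i + (Δt / M) *
            ((1 / 6) * (lts3Sub F I₁ G Δt M x0 x1 x2 (k + 1)).2.1 i +
             (1 / 6) * (lts3Sub F I₁ G Δt M x0 x1 x2 (k + 1)).2.2.1 i +
             (2 / 3) * (lts3Sub F I₁ G Δt M x0 x1 x2 (k + 1)).2.2.2.1 i))) =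
          (∑ i ∈ CI, A i * (x0 i + (Δt / M) *
            ((1 / 6) * (lts3Sub F I₁ G Δt M x0 x1 x2 k).2.1 i +
             (1 / 6) * (lts3Sub F I₁ G Δt M x0 x1 x2 k).2.2.1 i +
             (2 / 3) * (lts3Sub F I₁ G Δt M x0 x1 x2 k).2.2.2.1 i))) +
          (Δt / M) * ∑ i ∈ CI, A i *
            ((1 / 6) * G (LTS3Aux.V F I₁ G Δt M x0 x1 x2 k) i +
             (1 / 6) * G (LTS3Aux.W F I₁ G Δt M x0 x1 x2 k) i +
             (2 / 3) * G (LTS3Aux.Z F I₁ G Δt M x0 x1 x2 k) i) := by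
        rw [Finset.mul_sum, ← Finset.sum_add_distrib]
        refine Finset.sum_congr rfl fun i hi => ?_
        rw [LTS3Aux.P_update F I₁ G Δt M x0 x1 x2 k i,
          LTS3Aux.Q_update F I₁ G Δt M x0 x1 x2 k i,
          LTS3Aux.R_update F I₁ G Δt M x0 x1 x2 k i]
        ring
      have e3 : (∑ i ∈ CC, A i * (x0 i + ((k + 1 : ℕ) : ℝ) * (Δt / M) *
            ((1 / 6) * G x0 i + (1 / 6) * G x1 i + (2 / 3) * G x2 i))) =
          (∑ i ∈ CC, A i * (x0 i + (k : ℝ) * (Δt / M) *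
            ((1 / 6) * G x0 i + (1 / 6) * G x1 i + (2 / 3) * G x2 i))) +
          (Δt / M) * ∑ i ∈ CC, A i *
            ((1 / 6) * G (LTS3Aux.V F I₁ G Δt M x0 x1 x2 k) i +
             (1 / 6) * G (LTS3Aux.W F I₁ G Δt M x0 x1 x2 k) i +
             (2 / 3) * G (LTS3Aux.Z F I₁ G Δt M x0 x1 x2 k) i) := by
        rw [Finset.mul_sum, ← Finset.sum_add_distrib]
        refine Finset.sum_congr rfl fun i hi => ?_
        obtain ⟨hiCell, hiF, hiI₁, hiI₂, hiC⟩ := memCC i hi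
        have hv : G (LTS3Aux.V F I₁ G Δt M x0 x1 x2 k) i = G x0 i :=
          hGC i hiCell hiC _ _ fun j hj =>
            LTS3Aux.V_eq F I₁ G Δt M x0 x1 x2 k (hnF j hj) (hnI₁ j hj)
        have hw : G (LTS3Aux.W F I₁ G Δt M x0 x1 x2 k) i = G x1 i :=
          hGC i hiCell hiC _ _ fun j hj =>
            LTS3Aux.W_eq F I₁ G Δt M x0 x1 x2 k (hnF j hj) (hnI₁ j hj)
        have hz : G (LTS3Aux.Z F I₁ G Δt M x0 x1 x2 k) i = G x2 i :=
          hGC i hiCell hiC _ _ fun j hj =>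
            LTS3Aux.Z_eq F I₁ G Δt M x0 x1 x2 k (hnF j hj) (hnI₁ j hj)
        rw [hv, hw, hz]
        push_cast
        ring
      rw [e1, e2, e3]
      linear_combination ih + (Δt / (M : ℝ)) * hTC
  -- final assembly
  obtain ⟨m, rfl⟩ : ∃ m, M = m + 1 := ⟨M - 1, (Nat.succ_pred_eq_of_pos hM).symm⟩
  have hnew : lts3Step F Fu I₁ I₂ C G Δt (m + 1) x0 = fun i =>
      if i ∈ F then (lts3Sub F I₁ G Δt (m + 1) x0 x1 x2 (m + 1)).1 i
      else if i ∈ C then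
        (1 / 3) * x0 i + (2 / 3) * x2 i +
          (2 / 3) * Δt * G (lts3Sub F I₁ G Δt (m + 1) x0 x1 x2 (m + 1)).2.2.2.2 i
      else
        x0 i + (Δt / (m + 1 : ℕ)) *
          ((1 / 6) * (lts3Sub F I₁ G Δt (m + 1) x0 x1 x2 (m + 1)).2.1 i +
           (1 / 6) * (lts3Sub F I₁ G Δt (m + 1) x0 x1 x2 (m + 1)).2.2.1 i +
           (2 / 3) * (lts3Sub F I₁ G Δt (m + 1) x0 x1 x2 (m + 1)).2.2.2.1 i) := rfl
  have f1 : ∀ i ∈ CF, A i * lts3Step F Fu I₁ I₂ C G Δt (m + 1) x0 i =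
      A i * (lts3Sub F I₁ G Δt (m + 1) x0 x1 x2 (m + 1)).1 i := by
    intro i hi
    simp only [hnew]
    rw [if_pos (memCF i hi).2]
  have f2 : ∀ i ∈ CI, A i * lts3Step F Fu I₁ I₂ C G Δt (m + 1) x0 i =
      A i * (x0 i + (Δt / (m + 1 : ℕ)) *
        ((1 / 6) * (lts3Sub F I₁ G Δt (m + 1) x0 x1 x2 (m + 1)).2.1 i +
         (1 / 6) * (lts3Sub F I₁ G Δt (m + 1) x0 x1 x2 (m + 1)).2.2.1 i +
         (2 / 3) * (lts3Sub F I₁ G Δt (m + 1) x0 x1 x2 (m + 1)).2.2.2.1 i)) := by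
    intro i hi
    obtain ⟨hiCell, hiF, hiC⟩ := memCI i hi
    simp only [hnew]
    rw [if_neg hiF, if_neg hiC]
  have f3 : ∀ i ∈ CC, A i * lts3Step F Fu I₁ I₂ C G Δt (m + 1) x0 i =
      A i * (x0 i + ((m + 1 : ℕ) : ℝ) * (Δt / (m + 1 : ℕ)) *
        ((1 / 6) * G x0 i + (1 / 6) * G x1 i + (2 / 3) * G x2 i)) := by
    intro i hi
    obtain ⟨hiCell, hiF, hiI₁, hiI₂, hiC⟩ := memCC i hi
    simp only [hnew]
    rw [if_neg hiF, if_pos hiC, LTS3Aux.zlast_eq]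
    rw [hGC i hiCell hiC _ x2 fun j hj =>
      LTS3Aux.Z_eq F I₁ G Δt (m + 1) x0 x1 x2 m (hnF j hj) (hnI₁ j hj)]
    have hx1i : x1 i = x0 i + Δt * G x0 i := by
      rw [hx1]
      simp [hiF]
    have hx2i : x2 i = (3 / 4) * x0 i + (1 / 4) * x1 i + (1 / 4) * Δt * G x1 i := by
      rw [hx2]
    rw [hx2i, hx1i]
    have hm1 : ((m : ℝ) + 1) ≠ 0 := by positivity
    push_cast
    field_simp
    ring
  rw [hsplit, Finset.sum_congr rfl f1, Finset.sum_congr rfl f2, Finset.sum_congr rfl f3]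
  exact key (m + 1)
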